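/- For 0 < β < 1, the inequality β·log₂(1/β) + (1−β)² ≥ (1+β)·log₂(2/(1+β)) holds. -/

import Mathlib

open Real Set

-- lower bound: for 0 ≤ u < 1, u + u²/2 + u³/3 ≤ -log(1-u)
lemma log_lb_aux (u : ℝ) (h0 : 0 ≤ u) (h1 : u < 1) :
    u + u^2/2 + u^3/3 ≤ -Real.log (1 - u) := by
  set f : ℝ → ℝ := fun x => -Real.log (1 - x) - (x + x^2/2 + x^3/3) with hf
  have hd : ∀ x ∈ Set.Ioo (0:ℝ) 1, HasDerivAt f (1/(1-x) - (1 + x + x^2)) x := by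
    intro x hx
    have hne : 1 - x ≠ 0 := by rw [Set.mem_Ioo] at hx; intro h; nlinarith [hx.2]
    have h1' : HasDerivAt (fun y : ℝ => 1 - y) (-1) x := by
      simpa using (hasDerivAt_id x).const_sub 1
    have h2' := h1'.log hne
    have h3' : HasDerivAt (fun y : ℝ => y + y^2/2 + y^3/3) (1 + x + x^2) x := by
      have := ((hasDerivAt_id x).add (((hasDerivAt_pow 2 x).div_const 2))).add
        ((hasDerivAt_pow 3 x).div_const 3)
      refine this.congr_deriv ?_
      push_cast; ring
    have := (h2'.neg).sub h3'
    refine this.congr_deriv ?_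
    ring
  have mono : MonotoneOn f (Set.Ico (0:ℝ) 1) := by
    apply monotoneOn_of_deriv_nonneg (convex_Ico 0 1)
    · apply ContinuousOn.sub
      · apply ContinuousOn.neg
        apply ContinuousOn.log
        · fun_prop
        · intro x hx
          rw [Set.mem_Ico] at hx
          intro h; nlinarith [hx.2]
      · fun_prop
    · rw [interior_Ico]
      intro x hx
      exact (hd x hx).differentiableAt.differentiableWithinAt
    · rw [interior_Ico]
      intro x hx
      rw [(hd x hx).deriv]
      rw [Set.mem_Ioo] at hx
      have hpos : (0:ℝ) < 1 - x := by linarith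
      rw [sub_nonneg, ← sub_nonneg, div_sub' hpos.ne']
      apply div_nonneg _ hpos.le
      nlinarith [pow_nonneg hx.1.le 3]
  have h00 : (0:ℝ) ∈ Set.Ico (0:ℝ) 1 := by constructor <;> norm_num
  have hu : u ∈ Set.Ico (0:ℝ) 1 := ⟨h0, h1⟩
  have := mono h00 hu h0
  simp only [hf] at this
  norm_num at this
  linarith

-- upper bound: for 0 ≤ v < 1, -log(1-v) ≤ v + v²/2 + v³/(3(1-v))
lemma log_ub_aux (v : ℝ) (h0 : 0 ≤ v) (h1 : v < 1) :
    -Real.log (1 - v) ≤ v + v^2/2 + v^3/(3*(1-v)) := by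
  set f : ℝ → ℝ := fun x => x + x^2/2 + x^3/(3*(1-x)) + Real.log (1 - x) with hf
  have hd : ∀ x ∈ Set.Ioo (0:ℝ) 1, HasDerivAt f
      (1 + x + (3*x^2*(3*(1-x)) - x^3*(-3))/(3*(1-x))^2 + (-1)/(1-x)) x := by
    intro x hx
    rw [Set.mem_Ioo] at hx
    have hne : 1 - x ≠ 0 := by intro h; nlinarith [hx.2]
    have hne' : 3 * (1 - x) ≠ 0 := by intro h; nlinarith [hx.2]
    have h1' : HasDerivAt (fun y : ℝ => 1 - y) (-1) x := by
      simpa using (hasDerivAt_id x).const_sub 1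
    have hlog := h1'.log hne
    have hden : HasDerivAt (fun y : ℝ => 3*(1-y)) (-3) x := by
      have := h1'.const_mul (3:ℝ)
      refine this.congr_deriv ?_; ring
    have hq : HasDerivAt (fun y : ℝ => y^3/(3*(1-y)))
        ((3*x^2*(3*(1-x)) - x^3*(-3))/(3*(1-x))^2) x := by
      have hnum : HasDerivAt (fun y : ℝ => y^3) (3*x^2) x := by
        simpa using hasDerivAt_pow 3 x
      exact hnum.div hden hne'
    have hpoly : HasDerivAt (fun y : ℝ => y + y^2/2) (1 + x) x := by
      have := (hasDerivAt_id x).add ((hasDerivAt_pow 2 x).div_const 2)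
      refine this.congr_deriv ?_; push_cast; ring
    exact (hpoly.add hq).add hlog
  have mono : MonotoneOn f (Set.Ico (0:ℝ) 1) := by
    apply monotoneOn_of_deriv_nonneg (convex_Ico 0 1)
    · apply ContinuousOn.add
      · apply ContinuousOn.add
        · fun_prop
        · apply ContinuousOn.div
          · fun_prop
          · fun_prop
          · intro x hx
            rw [Set.mem_Ico] at hx
            intro h; nlinarith [hx.2]
      · apply ContinuousOn.log
        · fun_prop
        · intro x hx
          rw [Set.mem_Ico] at hx
          intro h; nlinarith [hx.2]
    · rw [interior_Ico]
      intro x hx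
      exact (hd x hx).differentiableAt.differentiableWithinAt
    · rw [interior_Ico]
      intro x hx
      rw [(hd x hx).deriv]
      rw [Set.mem_Ioo] at hx
      have hpos : (0:ℝ) < 1 - x := by linarith
      have key : 1 + x + (3*x^2*(3*(1-x)) - x^3*(-3))/(3*(1-x))^2 + (-1)/(1-x)
          = x^3 / (3*(1-x)^2) := by
        field_simp
        ring
      rw [key]
      apply div_nonneg (pow_nonneg hx.1.le 3)
      positivity
  have h00 : (0:ℝ) ∈ Set.Ico (0:ℝ) 1 := by constructor <;> norm_num
  have hv : v ∈ Set.Ico (0:ℝ) 1 := ⟨h0, h1⟩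
  have := mono h00 hv h0
  simp only [hf] at this
  norm_num at this
  linarith

-- for 0 ≤ x : x - x²/2 ≤ log(1+x)
lemma log_one_add_lb (x : ℝ) (h0 : 0 ≤ x) : x - x^2/2 ≤ Real.log (1 + x) := by
  set f : ℝ → ℝ := fun y => Real.log (1 + y) - (y - y^2/2) with hf
  have hd : ∀ y : ℝ, 0 < y → HasDerivAt f (1/(1+y) - (1 - y)) y := by
    intro y hy
    have hne : 1 + y ≠ 0 := by linarith
    have h1' : HasDerivAt (fun z : ℝ => 1 + z) 1 y := by
      simpa using (hasDerivAt_id y).const_add 1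
    have hlog := h1'.log hne
    have hpoly : HasDerivAt (fun z : ℝ => z - z^2/2) (1 - y) y := by
      have := (hasDerivAt_id y).sub ((hasDerivAt_pow 2 y).div_const 2)
      refine this.congr_deriv ?_; push_cast; ring
    exact hlog.sub hpoly
  have mono : MonotoneOn f (Set.Ici (0:ℝ)) := by
    apply monotoneOn_of_deriv_nonneg (convex_Ici 0)
    · apply ContinuousOn.sub
      · apply ContinuousOn.log
        · fun_prop
        · intro x hx
          rw [Set.mem_Ici] at hx
          intro h; linarith
      · fun_prop
    · rw [interior_Ici]
      intro y hy
      exact (hd y hy).differentiableAt.differentiableWithinAt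
    · rw [interior_Ici]
      intro y hy
      rw [(hd y hy).deriv]
      rw [Set.mem_Ioi] at hy
      have hpos : (0:ℝ) < 1 + y := by linarith
      rw [sub_nonneg, ← sub_nonneg, div_sub' hpos.ne']
      apply div_nonneg _ hpos.le
      nlinarith
  have := mono (Set.self_mem_Ici) (Set.mem_Ici.2 h0) h0
  simp only [hf] at this
  norm_num at this
  linarith

/-- For `0 < β < 1`: `β·log₂(1/β) + (1-β)² ≥ (1+β)·log₂(2/(1+β))`. -/
theorem beta_ineq_one (β : ℝ) (h0 : 0 < β) (h1 : β < 1) :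
    β * Real.logb 2 (1 / β) + (1 - β) ^ 2 ≥ (1 + β) * Real.logb 2 (2 / (1 + β)) := by
  have hL : (0:ℝ) < Real.log 2 := Real.log_pos (by norm_num)
  have hLlb : (0.6931471803:ℝ) < Real.log 2 := Real.log_two_gt_d9
  have hLub : Real.log 2 < 0.6931471808 := Real.log_two_lt_d9
  have hβ1 : (0:ℝ) < 1 + β := by linarith
  have hlog1 : Real.log (1/β) = -Real.log β := by rw [one_div, Real.log_inv]
  have hlog2 : Real.log (2/(1+β)) = Real.log 2 - Real.log (1+β) :=
    Real.log_div (by norm_num) hβ1.ne'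
  have key : (1+β) * (Real.log 2 - Real.log (1+β)) ≤ β * (-Real.log β) + (1-β)^2 * Real.log 2 := by
    rcases le_or_gt β (1/4) with hc | hc
    · have hA := log_one_add_lb β h0.le
      have hB : 2 * Real.log 2 ≤ -Real.log β := by
        have h4 : Real.log β ≤ Real.log (1/4 : ℝ) := by
          apply Real.log_le_log h0; linarith
        have h5 : Real.log (1/4 : ℝ) = -(2 * Real.log 2) := by
          rw [one_div, Real.log_inv, show (4:ℝ) = 2^2 by norm_num, Real.log_pow]
          push_cast; ring
        linarith
      have e1 : (1+β) * (Real.log 2 - Real.log (1+β)) ≤ (1+β) * (Real.log 2 - (β - β^2/2)) := by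
        apply mul_le_mul_of_nonneg_left _ hβ1.le
        linarith
      have e2 : β * (2 * Real.log 2) ≤ β * (-Real.log β) :=
        mul_le_mul_of_nonneg_left hB h0.le
      nlinarith [mul_pos h0 hL, sq_nonneg β, mul_pos (mul_pos h0 h0) hL]
    · -- β > 1/4
      have hA : (1-β) + (1-β)^2/2 + (1-β)^3/3 ≤ -Real.log β := by
        have := log_lb_aux (1-β) (by linarith) (by linarith)
        rwa [show (1 - (1-β)) = β by ring] at this
      have hB : Real.log 2 - Real.log (1+β)
          ≤ (1-β)/2 + ((1-β)/2)^2/2 + ((1-β)/2)^3/(3*(1-(1-β)/2)) := by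
        have hub := log_ub_aux ((1-β)/2) (by linarith) (by linarith)
        have hrw : Real.log (1 - (1-β)/2) = Real.log (1+β) - Real.log 2 := by
          rw [show (1 - (1-β)/2) = (1+β)/2 by ring]
          exact Real.log_div hβ1.ne' (by norm_num)
        rw [hrw] at hub
        linarith
      have hBrw : ((1-β)/2)^2/2 = (1-β)^2/8 := by ring
      have hBrw2 : ((1-β)/2)^3/(3*(1-(1-β)/2)) = (1-β)^3/(12*(1+β)) := by
        rw [div_eq_div_iff (by nlinarith) (by nlinarith)]
        ring
      rw [hBrw, hBrw2] at hB
      have hB2 : (1+β) * (Real.log 2 - Real.log (1+β))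
          ≤ (1+β) * ((1-β)/2 + (1-β)^2/8) + (1-β)^3/12 := by
        have := mul_le_mul_of_nonneg_left hB hβ1.le
        have hq : (1+β) * ((1-β)^3/(12*(1+β))) = (1-β)^3/12 := by
          field_simp
        nlinarith [this, hq]
      have hA2 : β * ((1-β) + (1-β)^2/2 + (1-β)^3/3) ≤ β * (-Real.log β) :=
        mul_le_mul_of_nonneg_left hA h0.le
      have h2 : 0 ≤ Real.log 2 - 1/4 - (1-β)/8 - (1-β)^2/3 := by nlinarith
      nlinarith [mul_nonneg (sq_nonneg (1-β)) h2]
  rw [ge_iff_le, Real.logb, Real.logb, hlog1, hlog2, ← sub_nonneg]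
  have heq : β * (-Real.log β / Real.log 2) + (1-β)^2
      - (1+β) * ((Real.log 2 - Real.log (1+β)) / Real.log 2)
      = (β * (-Real.log β) + (1-β)^2 * Real.log 2
        - (1+β) * (Real.log 2 - Real.log (1+β))) / Real.log 2 := by
    field_simp
  rw [heq]
  apply div_nonneg _ hL.le
  linarith
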